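/- Let (Ŝ_T)_{T∈ℕ} be a sequence of random p×p matrices that are almost surely symmetric positive definite and satisfy √T(Ŝ_T − I_p) = O_p(1). Then √T(Ŝ_T^{−1/2} − I_p) = O_p(1), where Ŝ_T^{−1/2} denotes the inverse of the unique symmetric positive definite square root of Ŝ_T. -/

import Mathlib

open MeasureTheory Filter Matrix Finset
open scoped Topology ENNReal NNReal Kronecker

noncomputable section

/-- Squared Frobenius norm of a real matrix. -/
def frobSq {ι κ : Type*} [Fintype ι] [Fintype κ] (M : Matrix ι κ ℝ) : ℝ :=
  ∑ i, ∑ j, (M i j) ^ 2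

/-- Frobenius norm of a real matrix. -/
def frobNorm {ι κ : Type*} [Fintype ι] [Fintype κ] (M : Matrix ι κ ℝ) : ℝ :=
  Real.sqrt (frobSq M)

/-- Euclidean norm of a vector. -/
def euclNorm {ι : Type*} [Fintype ι] (x : ι → ℝ) : ℝ :=
  Real.sqrt (∑ i, (x i) ^ 2)

/-- `X_T = O_p(1)` (boundedness in probability), matrix version, Frobenius norm. -/
def MatIsOp {Ω ι κ : Type*} [MeasurableSpace Ω] [Fintype ι] [Fintype κ]
    (μ : Measure Ω) (X : ℕ → Ω → Matrix ι κ ℝ) : Prop :=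
  ∀ ε : ℝ, 0 < ε → ∃ M : ℝ, 0 < M ∧ ∀ T, μ {ω | M < frobNorm (X T ω)} ≤ ENNReal.ofReal ε

/-- `X_T = O_p(1)` (boundedness in probability), vector version, Euclidean norm. -/
def VecIsOp {Ω ι : Type*} [MeasurableSpace Ω] [Fintype ι]
    (μ : Measure Ω) (X : ℕ → Ω → ι → ℝ) : Prop :=
  ∀ ε : ℝ, 0 < ε → ∃ M : ℝ, 0 < M ∧ ∀ T, μ {ω | M < euclNorm (X T ω)} ≤ ENNReal.ofReal ε

/-- Convergence to zero in probability, matrix version (Frobenius norm). -/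
def MatTendstoP0 {Ω ι κ : Type*} [MeasurableSpace Ω] [Fintype ι] [Fintype κ]
    (μ : Measure Ω) (X : ℕ → Ω → Matrix ι κ ℝ) : Prop :=
  ∀ ε : ℝ, 0 < ε → Tendsto (fun T => μ {ω | ε < frobNorm (X T ω)}) atTop (𝓝 0)

/-- Convergence to zero in probability, real-valued version. -/
def RealTendstoP0 {Ω : Type*} [MeasurableSpace Ω]
    (μ : Measure Ω) (X : ℕ → Ω → ℝ) : Prop :=
  ∀ ε : ℝ, 0 < ε → Tendsto (fun T => μ {ω | ε < |X T ω|}) atTop (𝓝 0)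

/-- Convergence in distribution: weak convergence of the laws to the measure `ν`. -/
def TendstoInDist {Ω E : Type*} [MeasurableSpace Ω] [MeasurableSpace E] [TopologicalSpace E]
    (μ : Measure Ω) (X : ℕ → Ω → E) (ν : Measure E) : Prop :=
  ∀ f : BoundedContinuousFunction E ℝ,
    Tendsto (fun T => ∫ ω, f (X T ω) ∂μ) atTop (𝓝 (∫ x, f x ∂ν))

open scoped ComplexOrder in
/-- The square root of a positive semidefinite matrix, as defined in the older Mathlib
(`Matrix.PosSemidef.sqrt`, since removed). -/
def Matrix.PosSemidef.sqrt {n 𝕜 : Type*} [Fintype n] [DecidableEq n] [RCLike 𝕜]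
    {A : Matrix n n 𝕜} (hA : A.PosSemidef) : Matrix n n 𝕜 :=
  hA.1.eigenvectorUnitary.1 * diagonal ((↑) ∘ (√·) ∘ hA.1.eigenvalues) *
  (star hA.1.eigenvectorUnitary : Matrix n n 𝕜)

open Classical in
/-- The centered (possibly degenerate) Gaussian distribution `N(0, V)` on `ι → ℝ`,
realized as the law of `V^{1/2} z` with `z` standard Gaussian. -/
def gaussianOfCov {ι : Type*} [Fintype ι] [DecidableEq ι] (V : Matrix ι ι ℝ) :
    Measure (ι → ℝ) :=
  if h : V.PosSemidef then
    Measure.map (fun z => h.sqrt.mulVec z)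
      (Measure.pi fun _ : ι => ProbabilityTheory.gaussianReal 0 1)
  else 0

/-- Chi-squared distribution with `k` degrees of freedom: Gamma, shape `k/2`, rate `1/2`. -/
def chiSq (k : ℝ) : Measure ℝ := ProbabilityTheory.gammaMeasure (k / 2) (1 / 2)

open Classical in
/-- Inverse of the unique symmetric positive definite square root of `S`
(junk value `0` if `S` is not positive definite). -/
def invSqrt {ι : Type*} [Fintype ι] [DecidableEq ι] (S : Matrix ι ι ℝ) : Matrix ι ι ℝ :=
  if h : S.PosDef then (h.posSemidef.sqrt)⁻¹ else 0

/-- Column-vectorization of an `r × r` matrix, indexed by (column, row) pairs. -/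
def vecM {r : ℕ} (M : Matrix (Fin r) (Fin r) ℝ) : Fin r × Fin r → ℝ :=
  fun q => M q.2 q.1

/-- The commutation matrix `K_rr = ∑ i j, E_r^{ij} ⊗ E_r^{ji}`. -/
def commMatrix (r : ℕ) : Matrix (Fin r × Fin r) (Fin r × Fin r) ℝ :=
  ∑ i : Fin r, ∑ j : Fin r, Matrix.single i j (1 : ℝ) ⊗ₖ Matrix.single j i (1 : ℝ)

/-- The matrix `D_rr = ∑ i, E_r^{ii} ⊗ E_r^{ii}`. -/
def dblDiagMatrix (r : ℕ) : Matrix (Fin r × Fin r) (Fin r × Fin r) ℝ :=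
  ∑ i : Fin r, Matrix.single i i (1 : ℝ) ⊗ₖ Matrix.single i i (1 : ℝ)

/-- The all-ones matrix `J_r`. -/
def onesMat (r : ℕ) : Matrix (Fin r) (Fin r) ℝ := Matrix.of fun _ _ => 1


namespace Stmt4Aux

variable {p : ℕ}

/-! ### Frobenius norm basics -/

lemma frobSq_nonneg {ι κ : Type*} [Fintype ι] [Fintype κ] (M : Matrix ι κ ℝ) :
    0 ≤ frobSq M :=
  Finset.sum_nonneg fun _ _ => Finset.sum_nonneg fun _ _ => sq_nonneg _

lemma frobNorm_nonneg {ι κ : Type*} [Fintype ι] [Fintype κ] (M : Matrix ι κ ℝ) :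
    0 ≤ frobNorm M := Real.sqrt_nonneg _

lemma frobNorm_sq {ι κ : Type*} [Fintype ι] [Fintype κ] (M : Matrix ι κ ℝ) :
    frobNorm M ^ 2 = frobSq M := Real.sq_sqrt (frobSq_nonneg M)

lemma frobNorm_mono {ι κ : Type*} [Fintype ι] [Fintype κ] {M N : Matrix ι κ ℝ}
    (h : frobSq M ≤ frobSq N) : frobNorm M ≤ frobNorm N :=
  Real.sqrt_le_sqrt h

lemma frobNorm_smul {ι κ : Type*} [Fintype ι] [Fintype κ] (c : ℝ) (hc : 0 ≤ c)
    (M : Matrix ι κ ℝ) : frobNorm (c • M) = c * frobNorm M := by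
  have : frobSq (c • M) = c ^ 2 * frobSq M := by
    simp [frobSq, Finset.mul_sum, mul_pow]
  rw [frobNorm, this, frobNorm, Real.sqrt_mul (sq_nonneg c), Real.sqrt_sq hc]

lemma frobSq_eq_trace (M : Matrix (Fin p) (Fin p) ℝ) :
    frobSq M = (Mᴴ * M).trace := by
  simp only [Matrix.trace, Matrix.diag, Matrix.mul_apply, Matrix.conjTranspose_apply,
    star_trivial, frobSq, sq]
  exact Finset.sum_comm

lemma frobSq_conj {U : Matrix (Fin p) (Fin p) ℝ} (hU1 : star U * U = 1)
    (M : Matrix (Fin p) (Fin p) ℝ) :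
    frobSq (U * M * star U) = frobSq M := by
  rw [frobSq_eq_trace, frobSq_eq_trace]
  have h1 : (U * M * star U)ᴴ = U * Mᴴ * star U := by
    simp only [Matrix.star_eq_conjTranspose, Matrix.conjTranspose_mul,
      Matrix.conjTranspose_conjTranspose, Matrix.mul_assoc]
  rw [h1]
  have h2 : U * Mᴴ * star U * (U * M * star U) = U * (Mᴴ * M) * star U := by
    simp only [Matrix.mul_assoc]
    rw [← Matrix.mul_assoc (star U) U (M * star U), hU1, Matrix.one_mul]
  rw [h2, Matrix.trace_mul_cycle, ← Matrix.mul_assoc, hU1, Matrix.one_mul]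

lemma frobSq_diagonal (v : Fin p → ℝ) : frobSq (Matrix.diagonal v) = ∑ i, v i ^ 2 := by
  simp only [frobSq, Matrix.diagonal_apply, apply_ite (· ^ 2)]
  simp

end Stmt4Aux

namespace Stmt4Aux

section Spectral

variable {p : ℕ} {S : Matrix (Fin p) (Fin p) ℝ}

lemma conj_diag_mul {U : Matrix (Fin p) (Fin p) ℝ} (hU1 : star U * U = 1)
    (v w : Fin p → ℝ) :
    (U * Matrix.diagonal v * star U) * (U * Matrix.diagonal w * star U)
      = U * Matrix.diagonal (fun i => v i * w i) * star U := by
  have : Matrix.diagonal v * (star U * U) * Matrix.diagonal w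
      = Matrix.diagonal (fun i => v i * w i) := by
    rw [hU1, Matrix.mul_one, Matrix.diagonal_mul_diagonal]
  calc (U * Matrix.diagonal v * star U) * (U * Matrix.diagonal w * star U)
      = U * (Matrix.diagonal v * (star U * U) * Matrix.diagonal w) * star U := by
        simp only [Matrix.mul_assoc]
    _ = U * Matrix.diagonal (fun i => v i * w i) * star U := by rw [this]

variable (hH : S.IsHermitian)

local notation "UU" => (Matrix.IsHermitian.eigenvectorUnitary hH : Matrix (Fin p) (Fin p) ℝ)

lemma star_mul_self_eigenvectorUnitary : star UU * UU = 1 :=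
  (Unitary.mem_iff.mp (Matrix.IsHermitian.eigenvectorUnitary hH).2).1

lemma mul_star_self_eigenvectorUnitary : UU * star UU = 1 :=
  (Unitary.mem_iff.mp (Matrix.IsHermitian.eigenvectorUnitary hH).2).2

lemma spectral_real :
    S = UU * Matrix.diagonal hH.eigenvalues * star UU := by
  have := hH.spectral_theorem
  rwa [RCLike.ofReal_real_eq_id, Function.id_comp] at this

lemma one_conj : (1 : Matrix (Fin p) (Fin p) ℝ) = UU * Matrix.diagonal (fun _ => 1) * star UU := by
  rw [show Matrix.diagonal (fun _ : Fin p => (1:ℝ)) = 1 from Matrix.diagonal_one,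
    Matrix.mul_one, mul_star_self_eigenvectorUnitary]

lemma conj_sub_conj (v w : Fin p → ℝ) :
    UU * Matrix.diagonal v * star UU - UU * Matrix.diagonal w * star UU
      = UU * Matrix.diagonal (fun i => v i - w i) * star UU := by
  rw [← Matrix.sub_mul, ← Matrix.mul_sub, Matrix.diagonal_sub]

lemma frobSq_conj_sub_one (v : Fin p → ℝ) :
    frobSq (UU * Matrix.diagonal v * star UU - 1) = ∑ i, (v i - 1) ^ 2 := by
  rw [one_conj hH, conj_sub_conj hH, frobSq_conj (star_mul_self_eigenvectorUnitary hH),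
    frobSq_diagonal]

end Spectral

section KeyBound

variable {p : ℕ} {S : Matrix (Fin p) (Fin p) ℝ}

lemma sqrt_eq_conj (hS : S.PosDef) :
    hS.posSemidef.sqrt
      = (Matrix.IsHermitian.eigenvectorUnitary hS.posSemidef.1 : Matrix (Fin p) (Fin p) ℝ)
        * Matrix.diagonal (fun i => Real.sqrt (hS.posSemidef.1.eigenvalues i))
        * star (Matrix.IsHermitian.eigenvectorUnitary hS.posSemidef.1 : Matrix (Fin p) (Fin p) ℝ) := by
  rw [Matrix.PosSemidef.sqrt, RCLike.ofReal_real_eq_id]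
  rfl

lemma invSqrt_eq_conj (hS : S.PosDef) :
    invSqrt S
      = (Matrix.IsHermitian.eigenvectorUnitary hS.posSemidef.1 : Matrix (Fin p) (Fin p) ℝ)
        * Matrix.diagonal (fun i => (Real.sqrt (hS.posSemidef.1.eigenvalues i))⁻¹)
        * star (Matrix.IsHermitian.eigenvectorUnitary hS.posSemidef.1 : Matrix (Fin p) (Fin p) ℝ) := by
  have hpos : ∀ i, 0 < hS.posSemidef.1.eigenvalues i := fun i => hS.eigenvalues_pos i
  rw [invSqrt, dif_pos hS]
  apply Matrix.inv_eq_right_inv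
  rw [sqrt_eq_conj hS, conj_diag_mul (star_mul_self_eigenvectorUnitary hS.posSemidef.1)]
  have : (fun i => Real.sqrt (hS.posSemidef.1.eigenvalues i)
      * (Real.sqrt (hS.posSemidef.1.eigenvalues i))⁻¹) = fun _ => (1:ℝ) := by
    funext i
    exact mul_inv_cancel₀ (Real.sqrt_pos.mpr (hpos i)).ne'
  rw [this, ← one_conj hS.posSemidef.1]

lemma scalar_bound {x : ℝ} (hx : 1/2 ≤ x) :
    ((Real.sqrt x)⁻¹ - 1) ^ 2 ≤ (x - 1) ^ 2 := by
  set s := Real.sqrt x with hsdef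
  have hs0 : 0 < s := Real.sqrt_pos.mpr (by linarith)
  have hs2 : s ^ 2 = x := Real.sq_sqrt (by linarith)
  have hs_half : 1/2 < s := by nlinarith [hs2, hs0]
  have h1 : s⁻¹ - 1 = (1 - s)/s := by field_simp
  rw [h1, div_pow, div_le_iff₀ (by positivity)]
  have e : x - 1 = (s - 1) * (s + 1) := by rw [← hs2]; ring
  have key : 1 ≤ (s + 1) * s := by nlinarith
  calc (1 - s) ^ 2 = (s - 1) ^ 2 * 1 := by ring
    _ ≤ (s - 1) ^ 2 * ((s + 1) * s) ^ 2 := by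
        refine mul_le_mul_of_nonneg_left ?_ (sq_nonneg (s - 1))
        nlinarith [key]
    _ = ((s - 1) * (s + 1)) ^ 2 * s ^ 2 := by ring
    _ = (x - 1) ^ 2 * s ^ 2 := by rw [e]

/-- The key deterministic estimate. -/
lemma key_bound (hS : S.PosDef) (hle : frobNorm (S - 1) ≤ 1/2) :
    frobNorm (invSqrt S - 1) ≤ frobNorm (S - 1) := by
  set hH := hS.posSemidef.1 with hHdef
  set lam := hH.eigenvalues with hlam
  have hSfs : frobSq (S - 1) = ∑ i, (lam i - 1) ^ 2 := by
    conv_lhs => rw [spectral_real hH]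
    exact frobSq_conj_sub_one hH lam
  have hIfs : frobSq (invSqrt S - 1) = ∑ i, ((Real.sqrt (lam i))⁻¹ - 1) ^ 2 := by
    conv_lhs => rw [invSqrt_eq_conj hS]
    exact frobSq_conj_sub_one hH _
  have hfs_le : frobSq (S - 1) ≤ 1/4 := by
    have h := frobNorm_sq (S - 1)
    have := pow_le_pow_left₀ (frobNorm_nonneg (S - 1)) hle 2
    rw [h] at this
    linarith [this]
  have hlam_half : ∀ i, 1/2 ≤ lam i := by
    intro i
    have h1 : (lam i - 1) ^ 2 ≤ frobSq (S - 1) := by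
      rw [hSfs]
      exact Finset.single_le_sum (f := fun j => (lam j - 1) ^ 2)
        (fun j _ => sq_nonneg _) (Finset.mem_univ i)
    nlinarith [h1, hfs_le]
  apply frobNorm_mono
  rw [hSfs, hIfs]
  exact Finset.sum_le_sum fun i _ => scalar_bound (hlam_half i)

end KeyBound

end Stmt4Aux

namespace Stmt4Aux

/-! ### Heron's iteration for the square root -/

noncomputable def heron (a : ℝ) : ℕ → ℝ
  | 0 => 1
  | k+1 => (heron a k + a / heron a k) / 2

lemma heron_pos {a : ℝ} (ha : 0 < a) : ∀ k, 0 < heron a k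
  | 0 => one_pos
  | k+1 => by
      have h := heron_pos ha k
      show 0 < (heron a k + a / heron a k) / 2
      positivity

lemma sqrt_le_heron {a : ℝ} (ha : 0 < a) (k : ℕ) : Real.sqrt a ≤ heron a (k+1) := by
  have hx := heron_pos ha k
  set x := heron a k with hxdef
  have hs2 : Real.sqrt a ^ 2 = a := Real.sq_sqrt ha.le
  show Real.sqrt a ≤ (x + a / x) / 2
  rw [le_div_iff₀ (by norm_num : (0:ℝ) < 2), ← sub_nonneg]
  have key : x + a / x - Real.sqrt a * 2 = (x - Real.sqrt a) ^ 2 / x := by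
    rw [← hs2]
    field_simp
    rw [Real.sqrt_sq (Real.sqrt_nonneg a)]
    ring
  rw [key]
  positivity

lemma heron_succ_le {a : ℝ} (ha : 0 < a) (k : ℕ) : heron a (k+2) ≤ heron a (k+1) := by
  have hx := heron_pos ha (k+1)
  have hsx := sqrt_le_heron ha k
  have hsn := Real.sqrt_nonneg a
  have hax : a ≤ heron a (k+1) ^ 2 := by
    have h' := pow_le_pow_left₀ hsn hsx 2
    rwa [Real.sq_sqrt ha.le] at h'
  show (heron a (k+1) + a / heron a (k+1)) / 2 ≤ heron a (k+1)
  rw [div_le_iff₀ (by norm_num : (0:ℝ) < 2)]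
  have : a / heron a (k+1) ≤ heron a (k+1) := by
    rw [div_le_iff₀ hx]
    nlinarith [hax]
  linarith

lemma heron_tendsto {a : ℝ} (ha : 0 < a) :
    Tendsto (heron a) atTop (𝓝 (Real.sqrt a)) := by
  set f : ℕ → ℝ := fun k => heron a (k+1) with hfdef
  have hanti : Antitone f := antitone_nat_of_succ_le fun k => heron_succ_le ha k
  have hbdd : BddBelow (Set.range f) :=
    ⟨Real.sqrt a, by rintro _ ⟨k, rfl⟩; exact sqrt_le_heron ha k⟩
  have hlim := tendsto_atTop_ciInf hanti hbdd
  set L : ℝ := ⨅ k, f k with hLdef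
  have hLge : Real.sqrt a ≤ L := le_ciInf fun k => sqrt_le_heron ha k
  have hL0 : 0 < L := lt_of_lt_of_le (Real.sqrt_pos.mpr ha) hLge
  have h2 : Tendsto (fun k => f (k+1)) atTop (𝓝 L) :=
    hlim.comp (tendsto_add_atTop_nat 1)
  have h3 : Tendsto (fun k => (f k + a / f k) / 2) atTop (𝓝 ((L + a / L) / 2)) :=
    (hlim.add (tendsto_const_nhds.div hlim hL0.ne')).div_const 2
  have hfe : (fun k => f (k+1)) = fun k => (f k + a / f k) / 2 := rfl
  have hLeq : L = (L + a / L) / 2 := tendsto_nhds_unique (hfe ▸ h2) h3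
  have hL' : L ≠ 0 := hL0.ne'
  have hLsq : L * L = a := by
    field_simp at hLeq
    linarith
  have hLs : L = Real.sqrt a := by
    rw [← Real.sqrt_mul_self hL0.le, hLsq]
  rw [← hLs]
  exact (tendsto_add_atTop_iff_nat 1).mp hlim

/-! ### Matrix Heron iteration -/

noncomputable def matHeron {p : ℕ} (S : Matrix (Fin p) (Fin p) ℝ) :
    ℕ → Matrix (Fin p) (Fin p) ℝ
  | 0 => 1
  | k+1 => (2⁻¹ : ℝ) • (matHeron S k + (matHeron S k)⁻¹ * S)

section MatHeron

variable {p : ℕ} {S : Matrix (Fin p) (Fin p) ℝ}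

lemma conj_diag_inv {U : Matrix (Fin p) (Fin p) ℝ} (hU1 : star U * U = 1)
    (hU2 : U * star U = 1) {v : Fin p → ℝ} (hv : ∀ i, v i ≠ 0) :
    (U * Matrix.diagonal v * star U)⁻¹ = U * Matrix.diagonal (fun i => (v i)⁻¹) * star U := by
  apply Matrix.inv_eq_right_inv
  rw [conj_diag_mul hU1]
  have : (fun i => v i * (v i)⁻¹) = fun _ => (1:ℝ) := funext fun i => mul_inv_cancel₀ (hv i)
  rw [this, show Matrix.diagonal (fun _ : Fin p => (1:ℝ)) = 1 from Matrix.diagonal_one,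
    Matrix.mul_one, hU2]

lemma matHeron_eq_conj (hS : S.PosDef) (k : ℕ) :
    matHeron S k
      = (Matrix.IsHermitian.eigenvectorUnitary hS.posSemidef.1 : Matrix (Fin p) (Fin p) ℝ)
        * Matrix.diagonal (fun i => heron (hS.posSemidef.1.eigenvalues i) k)
        * star (Matrix.IsHermitian.eigenvectorUnitary hS.posSemidef.1 : Matrix (Fin p) (Fin p) ℝ) := by
  set hH := hS.posSemidef.1 with hHdef
  have hspec := spectral_real hH
  set U := (Matrix.IsHermitian.eigenvectorUnitary hH : Matrix (Fin p) (Fin p) ℝ) with hUdef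
  have hU1 : star U * U = 1 := star_mul_self_eigenvectorUnitary hH
  have hU2 : U * star U = 1 := mul_star_self_eigenvectorUnitary hH
  have hpos : ∀ i, 0 < hH.eigenvalues i := fun i => hS.eigenvalues_pos i
  set lam := hH.eigenvalues with hlamdef
  induction k with
  | zero =>
      show (1 : Matrix (Fin p) (Fin p) ℝ) = _
      exact one_conj hH
  | succ k ih =>
      show (2⁻¹ : ℝ) • (matHeron S k + (matHeron S k)⁻¹ * S) = _
      rw [ih]
      rw [conj_diag_inv hU1 hU2 (fun i => (heron_pos (hpos i) k).ne')]
      conv_lhs => rw [hspec]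
      rw [conj_diag_mul hU1]
      rw [show (U * Matrix.diagonal (fun i => heron (lam i) k) * star U)
            + (U * Matrix.diagonal (fun i => (heron (lam i) k)⁻¹ * lam i) * star U)
          = U * (Matrix.diagonal (fun i => heron (lam i) k)
            + Matrix.diagonal (fun i => (heron (lam i) k)⁻¹ * lam i)) * star U by
        rw [Matrix.mul_add, Matrix.add_mul]]
      rw [Matrix.diagonal_add, ← Matrix.smul_mul, ← Matrix.mul_smul]
      congr 2
      ext i j
      rcases eq_or_ne i j with rfl | hij
      · simp only [Matrix.smul_apply, Matrix.diagonal_apply_eq, smul_eq_mul]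
        rw [show heron (lam i) (k+1) = (heron (lam i) k + lam i / heron (lam i) k) / 2 from rfl,
          inv_mul_eq_div]
        ring
      · simp [Matrix.diagonal_apply_ne _ hij]

lemma matHeron_tendsto_sqrt (hS : S.PosDef) (i j : Fin p) :
    Tendsto (fun k => matHeron S k i j) atTop (𝓝 (hS.posSemidef.sqrt i j)) := by
  set hH := hS.posSemidef.1 with hHdef
  set U := (Matrix.IsHermitian.eigenvectorUnitary hH : Matrix (Fin p) (Fin p) ℝ) with hUdef
  have hpos : ∀ a, 0 < hH.eigenvalues a := fun a => hS.eigenvalues_pos a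
  have hentry : ∀ v : Fin p → ℝ, (U * Matrix.diagonal v * star U) i j
      = ∑ a, U i a * v a * star U a j := by
    intro v
    simp [Matrix.mul_apply, Matrix.diagonal_apply, Finset.sum_ite_eq, Matrix.mul_apply,
      Finset.sum_mul]
  have h1 : ∀ k, matHeron S k i j = ∑ a, U i a * heron (hH.eigenvalues a) k * star U a j := by
    intro k
    rw [matHeron_eq_conj hS k, hentry]
  have h2 : hS.posSemidef.sqrt i j = ∑ a, U i a * Real.sqrt (hH.eigenvalues a) * star U a j := by
    rw [sqrt_eq_conj hS, hentry]
  simp only [h1, h2]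
  apply tendsto_finset_sum
  intro a _
  exact (((tendsto_const_nhds).mul (heron_tendsto (hpos a))).mul tendsto_const_nhds)

end MatHeron

end Stmt4Aux

namespace Stmt4Aux

section Meas

open scoped Classical

variable {p : ℕ} {Ω : Type*} [MeasurableSpace Ω]

lemma meas_det {g : Ω → Matrix (Fin p) (Fin p) ℝ}
    (hg : ∀ i j, Measurable fun ω => g ω i j) :
    Measurable fun ω => (g ω).det := by
  simp only [Matrix.det_apply']
  exact Finset.measurable_sum _ fun σ _ =>
    (Finset.measurable_prod Finset.univ fun i _ => hg (σ i) i).const_mul _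

lemma meas_inv {g : Ω → Matrix (Fin p) (Fin p) ℝ}
    (hg : ∀ i j, Measurable fun ω => g ω i j) (i j : Fin p) :
    Measurable fun ω => (g ω)⁻¹ i j := by
  simp only [Matrix.inv_def, Matrix.smul_apply, smul_eq_mul, Ring.inverse_eq_inv']
  refine Measurable.mul ((meas_det hg).inv) ?_
  simp only [Matrix.adjugate_apply]
  refine meas_det fun i' j' => ?_
  rcases eq_or_ne i' j with rfl | h
  · simpa [Matrix.updateRow_apply] using measurable_const
  · simpa [Matrix.updateRow_apply, h] using hg i' j'

lemma meas_mul {f g : Ω → Matrix (Fin p) (Fin p) ℝ}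
    (hf : ∀ i j, Measurable fun ω => f ω i j)
    (hg : ∀ i j, Measurable fun ω => g ω i j) (i j : Fin p) :
    Measurable fun ω => (f ω * g ω) i j := by
  simp only [Matrix.mul_apply]
  exact Finset.measurable_sum _ fun k _ => (hf i k).mul (hg k j)

lemma meas_matHeron {g : Ω → Matrix (Fin p) (Fin p) ℝ}
    (hg : ∀ i j, Measurable fun ω => g ω i j) (k : ℕ) (i j : Fin p) :
    Measurable fun ω => matHeron (g ω) k i j := by
  induction k generalizing i j with
  | zero => simpa [matHeron] using measurable_const
  | succ k ih =>
      show Measurable fun ω =>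
        ((2⁻¹ : ℝ) • (matHeron (g ω) k + (matHeron (g ω) k)⁻¹ * g ω)) i j
      simp only [Matrix.smul_apply, Matrix.add_apply, smul_eq_mul]
      exact ((ih i j).add (meas_mul (meas_inv ih) hg i j)).const_mul _

lemma posDef_iff_det (M : Matrix (Fin p) (Fin p) ℝ) :
    M.PosDef ↔ M.PosSemidef ∧ M.det ≠ 0 := by
  constructor
  · exact fun h => ⟨h.posSemidef, h.det_pos.ne'⟩
  · rintro ⟨hps, hdet⟩
    refine posDef_iff_dotProduct_mulVec.mpr ⟨hps.1, fun x hx => ?_⟩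
    rcases lt_or_eq_of_le (hps.dotProduct_mulVec_nonneg x) with h | h
    · exact h
    · exfalso
      have hMx : M *ᵥ x = 0 := (hps.dotProduct_mulVec_zero_iff x).mp h.symm
      have hinj : Function.Injective M.mulVec :=
        Matrix.mulVec_injective_iff_isUnit.mpr ((Matrix.isUnit_iff_isUnit_det M).mpr hdet.isUnit)
      exact hx (hinj (by rw [hMx, Matrix.mulVec_zero]))

lemma meas_posDef {g : Ω → Matrix (Fin p) (Fin p) ℝ}
    (hg : ∀ i j, Measurable fun ω => g ω i j) :
    MeasurableSet {ω | (g ω).PosDef} := by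
  obtain ⟨D, hDcount, hDdense⟩ := TopologicalSpace.exists_countable_dense (Fin p → ℝ)
  have hq : ∀ M : Matrix (Fin p) (Fin p) ℝ,
      Continuous fun x : Fin p → ℝ => x ⬝ᵥ M *ᵥ x := by
    intro M
    have : (fun x : Fin p → ℝ => x ⬝ᵥ M *ᵥ x)
        = fun x => ∑ i, x i * ∑ j, M i j * x j := by
      funext x
      simp [dotProduct, Matrix.mulVec]
    rw [this]
    exact continuous_finset_sum _ fun i _ => (continuous_apply i).mul
      (continuous_finset_sum _ fun j _ => continuous_const.mul (continuous_apply j))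
  have hseteq : {ω | (g ω).PosDef}
      = ({ω | ∀ i j, g ω i j = g ω j i} ∩ ⋂ x ∈ D, {ω | 0 ≤ x ⬝ᵥ (g ω) *ᵥ x})
        ∩ {ω | (g ω).det ≠ 0} := by
    ext ω
    simp only [Set.mem_setOf_eq, Set.mem_inter_iff, Set.mem_iInter]
    rw [posDef_iff_det]
    constructor
    · rintro ⟨hps, hdet⟩
      refine ⟨⟨fun i j => ?_, fun x _ => ?_⟩, hdet⟩
      · conv_lhs => rw [← hps.1]
        simp [Matrix.conjTranspose_apply]
      · have := hps.dotProduct_mulVec_nonneg x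
        simpa [show star x = x from funext fun i => rfl] using this
    · rintro ⟨⟨hsym, hpos⟩, hdet⟩
      refine ⟨posSemidef_iff_dotProduct_mulVec.mpr ⟨?_, fun x => ?_⟩, hdet⟩
      · ext i j
        simp only [Matrix.conjTranspose_apply, star_trivial]
        exact hsym j i
      · have hclosed : IsClosed {x : Fin p → ℝ | 0 ≤ x ⬝ᵥ (g ω) *ᵥ x} :=
          isClosed_le continuous_const (hq (g ω))
        have hsubset : D ⊆ {x : Fin p → ℝ | 0 ≤ x ⬝ᵥ (g ω) *ᵥ x} := fun x hx => hpos x hx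
        have hall : ∀ x : Fin p → ℝ, 0 ≤ x ⬝ᵥ (g ω) *ᵥ x := by
          intro x
          have : x ∈ closure D := by rw [hDdense.closure_eq]; trivial
          exact hclosed.closure_subset ((closure_mono hsubset).trans
            (by rw [hclosed.closure_eq]) this)
        simpa [show star x = x from funext fun i => rfl] using hall x
  rw [hseteq]
  refine MeasurableSet.inter (MeasurableSet.inter ?_ ?_) ?_
  · rw [show {ω | ∀ i j, g ω i j = g ω j i} = ⋂ i, ⋂ j, {ω | g ω i j = g ω j i} by
      ext ω; simp]
    exact MeasurableSet.iInter fun i => MeasurableSet.iInter fun j =>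
      measurableSet_eq_fun (hg i j) (hg j i)
  · refine MeasurableSet.biInter hDcount fun x _ => ?_
    have : Measurable fun ω => x ⬝ᵥ (g ω) *ᵥ x := by
      have : (fun ω => x ⬝ᵥ (g ω) *ᵥ x)
          = fun ω => ∑ i, x i * ∑ j, g ω i j * x j := by
        funext ω
        simp [dotProduct, Matrix.mulVec]
      rw [this]
      exact Finset.measurable_sum _ fun i _ => ((Finset.measurable_sum _ fun j _ =>
        (hg i j).mul_const _).const_mul _)
    exact measurableSet_le measurable_const this
  · exact (measurableSet_eq_fun (meas_det hg) measurable_const).compl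

/-- The symmetric psd square root as a total function (junk value `0`). -/
noncomputable def sqrtM (M : Matrix (Fin p) (Fin p) ℝ) : Matrix (Fin p) (Fin p) ℝ :=
  if h : M.PosDef then h.posSemidef.sqrt else 0

lemma invSqrt_eq_inv_sqrtM (M : Matrix (Fin p) (Fin p) ℝ) : invSqrt M = (sqrtM M)⁻¹ := by
  by_cases h : M.PosDef
  · simp [invSqrt, sqrtM, h]
  · simp [invSqrt, sqrtM, h, Matrix.inv_zero]

lemma meas_sqrtM {g : Ω → Matrix (Fin p) (Fin p) ℝ}
    (hg : ∀ i j, Measurable fun ω => g ω i j) (i j : Fin p) :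
    Measurable fun ω => sqrtM (g ω) i j := by
  apply measurable_of_tendsto_metrizable
    (f := fun k ω => if (g ω).PosDef then matHeron (g ω) k i j else 0)
  · intro k
    exact Measurable.ite (meas_posDef hg) (meas_matHeron hg k i j) measurable_const
  · rw [tendsto_pi_nhds]
    intro ω
    by_cases h : (g ω).PosDef
    · simp only [h, if_true]
      have : sqrtM (g ω) = h.posSemidef.sqrt := dif_pos h
      rw [this]
      exact matHeron_tendsto_sqrt h i j
    · simp only [h, if_false]
      have : sqrtM (g ω) = 0 := dif_neg h
      rw [this]
      simpa using tendsto_const_nhds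

lemma meas_invSqrt {g : Ω → Matrix (Fin p) (Fin p) ℝ}
    (hg : ∀ i j, Measurable fun ω => g ω i j) (i j : Fin p) :
    Measurable fun ω => invSqrt (g ω) i j := by
  simp only [invSqrt_eq_inv_sqrtM]
  exact meas_inv (meas_sqrtM hg) i j

lemma meas_frobNorm_aux {g : Ω → Matrix (Fin p) (Fin p) ℝ}
    (hg : ∀ i j, Measurable fun ω => g ω i j) :
    Measurable fun ω => frobNorm (g ω) := by
  apply Measurable.comp Real.continuous_sqrt.measurable
  exact Finset.measurable_sum _ fun i _ => Finset.measurable_sum _ fun j _ => (hg i j).pow_const 2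

end Meas

end Stmt4Aux

theorem statement4 {Ω : Type*} [MeasurableSpace Ω] (μ : Measure Ω) [IsProbabilityMeasure μ]
    (p : ℕ)
    (S : ℕ → Ω → Matrix (Fin p) (Fin p) ℝ)
    (hSmeas : ∀ T i j, Measurable fun ω => S T ω i j)
    (hSpd : ∀ T, ∀ᵐ ω ∂μ, (S T ω).PosDef)
    (hSop : MatIsOp μ fun T ω => Real.sqrt T • (S T ω - 1)) :
    MatIsOp μ fun T ω => Real.sqrt T • (invSqrt (S T ω) - 1) := by
  classical
  intro ε hε
  obtain ⟨M, hM, hbound⟩ := hSop ε hε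
  have hfmeas : ∀ T : ℕ, Measurable fun ω =>
      frobNorm (Real.sqrt T • (invSqrt (S T ω) - 1)) := by
    intro T
    apply Stmt4Aux.meas_frobNorm_aux
    intro i j
    have h1 := Stmt4Aux.meas_invSqrt (g := fun ω => S T ω) (hSmeas T) i j
    simpa [Matrix.smul_apply, Matrix.sub_apply, smul_eq_mul, sub_mul] using
      ((h1.sub measurable_const).const_mul (Real.sqrt T))
  have hsingle : ∀ T : ℕ, ∃ K : ℝ, 0 < K ∧
      μ {ω | K < frobNorm (Real.sqrt T • (invSqrt (S T ω) - 1))} ≤ ENNReal.ofReal ε := by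
    intro T
    set f : Ω → ℝ := fun ω => frobNorm (Real.sqrt T • (invSqrt (S T ω) - 1)) with hf
    have hs : ∀ n : ℕ, MeasurableSet {ω | (n : ℝ) < f ω} :=
      fun n => measurableSet_lt measurable_const (hfmeas T)
    have hanti : Antitone fun n : ℕ => {ω | (n : ℝ) < f ω} := by
      intro n m hnm ω hω
      have hle : (n : ℝ) ≤ (m : ℝ) := Nat.cast_le.mpr hnm
      exact lt_of_le_of_lt hle hω
    have hempty : ⋂ n : ℕ, {ω | (n : ℝ) < f ω} = ∅ := by
      ext ω
      simp only [Set.mem_iInter, Set.mem_setOf_eq, Set.mem_empty_iff_false, iff_false]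
      push_neg
      obtain ⟨n, hn⟩ := exists_nat_gt (f ω)
      exact ⟨n, hn.le⟩
    have htend := tendsto_measure_iInter_atTop (μ := μ)
      (s := fun n : ℕ => {ω | (n : ℝ) < f ω})
      (fun n => (hs n).nullMeasurableSet) hanti ⟨0, measure_ne_top μ _⟩
    rw [hempty, measure_empty] at htend
    obtain ⟨n, hn⟩ := (htend.eventually_lt_const (ENNReal.ofReal_pos.mpr hε)).exists
    refine ⟨(n : ℝ) + 1, by positivity, ?_⟩
    refine le_trans (measure_mono fun ω hω => ?_) hn.le
    simp only [Set.mem_setOf_eq] at hω ⊢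
    exact lt_trans (lt_add_one _) hω
  choose K hKpos hKle using hsingle
  set T₀ : ℕ := ⌈(2 * M) ^ 2⌉₊ + 1 with hT₀
  set M' : ℝ := max M 1 + ∑ T ∈ Finset.range T₀, max (K T) 0 with hM'
  have hsum_nonneg : (0:ℝ) ≤ ∑ T ∈ Finset.range T₀, max (K T) 0 :=
    Finset.sum_nonneg fun _ _ => le_max_right _ _
  have hM'pos : 0 < M' := by
    have h1 : (1:ℝ) ≤ max M 1 := le_max_right _ _
    rw [hM']
    linarith
  have hM'M : M ≤ M' := by
    have h1 : M ≤ max M 1 := le_max_left _ _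
    rw [hM']
    linarith
  have hM'K : ∀ T, T < T₀ → K T ≤ M' := by
    intro T hT
    have h1 : max (K T) 0 ≤ ∑ t ∈ Finset.range T₀, max (K t) 0 :=
      Finset.single_le_sum (f := fun t => max (K t) 0)
        (fun t _ => le_max_right _ _) (Finset.mem_range.mpr hT)
    have h2 : K T ≤ max (K T) 0 := le_max_left _ _
    have h3 : (0:ℝ) ≤ max M 1 := le_trans zero_le_one (le_max_right _ _)
    rw [hM']
    linarith
  refine ⟨M', hM'pos, fun T => ?_⟩
  by_cases hT : T < T₀
  · refine le_trans (measure_mono fun ω hω => ?_) (hKle T)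
    exact lt_of_le_of_lt (hM'K T hT) hω
  · push_neg at hT
    have hTlarge : (2 * M) ^ 2 ≤ (T : ℝ) := by
      have h1 : (⌈(2 * M) ^ 2⌉₊ : ℝ) ≤ (T : ℝ) :=
        Nat.cast_le.mpr (le_trans (Nat.le_succ _) hT)
      exact le_trans (Nat.le_ceil _) h1
    have hsqrtT : 2 * M ≤ Real.sqrt T := by
      rw [show (2 * M) = Real.sqrt ((2 * M) ^ 2) from (Real.sqrt_sq (by positivity)).symm]
      exact Real.sqrt_le_sqrt hTlarge
    have hsqrtpos : 0 < Real.sqrt T := lt_of_lt_of_le (by positivity) hsqrtT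
    have hsub : {ω | M' < frobNorm (Real.sqrt T • (invSqrt (S T ω) - 1))}
        ⊆ {ω | M < frobNorm (Real.sqrt T • (S T ω - 1))} ∪ {ω | ¬ (S T ω).PosDef} := by
      intro ω hω
      by_cases hpd : (S T ω).PosDef
      · left
        by_contra hc
        simp only [Set.mem_setOf_eq, not_lt] at hc
        have h1 : Real.sqrt T * frobNorm (S T ω - 1) ≤ M := by
          rwa [Stmt4Aux.frobNorm_smul _ (Real.sqrt_nonneg _)] at hc
        have h2 : frobNorm (S T ω - 1) ≤ 1 / 2 := by
          have h2a : frobNorm (S T ω - 1) ≤ M / Real.sqrt T := by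
            rw [le_div_iff₀ hsqrtpos]
            linarith [h1]
          refine le_trans h2a ?_
          rw [div_le_div_iff₀ hsqrtpos (by norm_num : (0:ℝ) < 2)]
          linarith
        have h3 := Stmt4Aux.key_bound hpd h2
        have h4 : frobNorm (Real.sqrt T • (invSqrt (S T ω) - 1)) ≤ M := by
          rw [Stmt4Aux.frobNorm_smul _ (Real.sqrt_nonneg _)]
          calc Real.sqrt T * frobNorm (invSqrt (S T ω) - 1)
              ≤ Real.sqrt T * frobNorm (S T ω - 1) :=
                mul_le_mul_of_nonneg_left h3 (Real.sqrt_nonneg _)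
            _ ≤ M := h1
        simp only [Set.mem_setOf_eq] at hω
        exact absurd hω (not_lt.mpr (le_trans h4 hM'M))
      · right
        exact hpd
    refine le_trans (measure_mono hsub) (le_trans (measure_union_le _ _) ?_)
    have hnull : μ {ω | ¬ (S T ω).PosDef} = 0 := by
      have h := hSpd T
      rwa [ae_iff] at h
    rw [hnull, add_zero]
    exact hbound T
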